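/- Let P be an n×n real matrix with Pᵀ = P, P² = P, and all entries non-negative. Then there exist finitely many unit vectors v_1, …, v_r ∈ ℝⁿ, each with all entries non-negative and with pairwise disjoint supports (i.e., for a ≠ b there is no coordinate i with (v_a)_i ≠ 0 and (v_b)_i ≠ 0), such that P = Σ_{a=1}^{r} v_a v_aᵀ. -/

import Mathlib

open Matrix
open scoped BigOperators

section Aux
variable {n : ℕ} {P : Matrix (Fin n) (Fin n) ℝ}

lemma pSym (hsymm : Pᵀ = P) (i j : Fin n) : P i j = P j i := by
  have := congrFun (congrFun hsymm j) i
  simpa [Matrix.transpose_apply] using this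

lemma pEntry (hidem : P * P = P) (i j : Fin n) : P i j = ∑ k, P i k * P k j := by
  conv_lhs => rw [← hidem]
  rw [Matrix.mul_apply]

lemma pDiag (hsymm : Pᵀ = P) (hidem : P * P = P) (i : Fin n) :
    P i i = ∑ k, P i k ^ 2 := by
  rw [pEntry hidem i i]
  refine Finset.sum_congr rfl fun k _ => ?_
  rw [pSym hsymm k i, sq]

lemma pRowZero (hsymm : Pᵀ = P) (hidem : P * P = P)
    {i : Fin n} (h : P i i = 0) (j : Fin n) : P i j = 0 := by
  have h2 := (pDiag hsymm hidem i).symm.trans h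
  have := (Finset.sum_eq_zero_iff_of_nonneg (fun k _ => sq_nonneg (P i k))).1 h2 j
    (Finset.mem_univ j)
  exact pow_eq_zero_iff (n := 2) (by norm_num) |>.1 this

lemma pTrans (hidem : P * P = P) (hpos : ∀ i j, 0 ≤ P i j)
    {i j k : Fin n} (hij : P i j ≠ 0) (hjk : P j k ≠ 0) : P i k ≠ 0 := by
  have h1 : 0 < P i j := lt_of_le_of_ne (hpos i j) (Ne.symm hij)
  have h2 : 0 < P j k := lt_of_le_of_ne (hpos j k) (Ne.symm hjk)
  have : P i j * P j k ≤ P i k := by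
    rw [pEntry hidem i k]
    exact Finset.single_le_sum (f := fun m => P i m * P m k)
      (fun m _ => mul_nonneg (hpos i m) (hpos m k)) (Finset.mem_univ j)
  nlinarith

lemma pDiagNe (hsymm : Pᵀ = P) (hidem : P * P = P)
    {i j : Fin n} (hij : P i j ≠ 0) : P i i ≠ 0 := by
  intro h
  exact hij (pRowZero hsymm hidem h j)

/-- row sums -/
noncomputable def rsum (P : Matrix (Fin n) (Fin n) ℝ) (i : Fin n) : ℝ := ∑ j, P i j

lemma rsum_nonneg (hpos : ∀ i j, 0 ≤ P i j) (i : Fin n) : 0 ≤ rsum P i :=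
  Finset.sum_nonneg fun j _ => hpos i j

lemma diag_le_rsum (hpos : ∀ i j, 0 ≤ P i j) (i : Fin n) : P i i ≤ rsum P i :=
  Finset.single_le_sum (fun j _ => hpos i j) (Finset.mem_univ i)

lemma rsum_fixed (hidem : P * P = P) (i : Fin n) :
    ∑ k, P i k * rsum P k = rsum P i := by
  unfold rsum
  simp_rw [Finset.mul_sum]
  rw [Finset.sum_comm]
  refine Finset.sum_congr rfl fun j _ => ?_
  exact (pEntry hidem i j).symm

/-- the candidate Perron vector for the class of `t` -/
noncomputable def uVec (P : Matrix (Fin n) (Fin n) ℝ) (t k : Fin n) : ℝ :=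
  if P t k ≠ 0 then rsum P k else 0

noncomputable def nrm (P : Matrix (Fin n) (Fin n) ℝ) (t : Fin n) : ℝ :=
  ∑ k, uVec P t k ^ 2

lemma uVec_nonneg (hpos : ∀ i j, 0 ≤ P i j) (t k : Fin n) : 0 ≤ uVec P t k := by
  unfold uVec; split
  · exact rsum_nonneg hpos k
  · exact le_refl _

lemma uVec_fixed (hsymm : Pᵀ = P) (hidem : P * P = P) (hpos : ∀ i j, 0 ≤ P i j)
    (t : Fin n) (i : Fin n) : ∑ k, P i k * uVec P t k = uVec P t i := by
  by_cases hi : P t i ≠ 0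
  · have : ∀ k, P i k * uVec P t k = P i k * rsum P k := by
      intro k
      by_cases hk : P t k ≠ 0
      · simp [uVec, hk]
      · push_neg at hk
        have hik : P i k = 0 := by
          by_contra hik
          exact (by simpa [hk] using pTrans hidem hpos hi hik)
        simp [hik]
    simp only [this]
    rw [rsum_fixed hidem i]
    simp [uVec, hi]
  · push_neg at hi
    have : ∀ k, P i k * uVec P t k = 0 := by
      intro k
      by_cases hk : P t k ≠ 0
      · have hik : P i k = 0 := by
          by_contra hik
          have hki : P k i ≠ 0 := by rw [← pSym hsymm i k]; exact hik
          exact (by simpa [hi] using pTrans hidem hpos hk hki)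
        simp [hik]
      · push_neg at hk
        simp [uVec, hk]
    rw [Finset.sum_congr rfl fun k _ => this k]
    simp [uVec, hi]

lemma nrm_pos (hsymm : Pᵀ = P) (hidem : P * P = P) (hpos : ∀ i j, 0 ≤ P i j)
    {t : Fin n} (ht : P t t ≠ 0) : 0 < nrm P t := by
  have htt : 0 < P t t := lt_of_le_of_ne (hpos t t) (Ne.symm ht)
  have h1 : 0 < uVec P t t := by
    unfold uVec
    rw [if_pos ht]
    exact lt_of_lt_of_le htt (diag_le_rsum hpos t)
  have : uVec P t t ^ 2 ≤ nrm P t :=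
    Finset.single_le_sum (f := fun k => uVec P t k ^ 2)
      (fun k _ => sq_nonneg _) (Finset.mem_univ t)
  nlinarith

end Aux

section Main
variable {n : ℕ} {P : Matrix (Fin n) (Fin n) ℝ}

lemma pMain (hsymm : Pᵀ = P) (hidem : P * P = P) (hpos : ∀ i j, 0 ≤ P i j)
    {t : Fin n} (ht : P t t ≠ 0) :
    ∀ i j, P t i ≠ 0 → P i j * nrm P t = uVec P t i * uVec P t j := by
  by_contra hcon
  push_neg at hcon
  obtain ⟨j0, k0, hj0, hQ⟩ := hcon
  have hN : 0 < nrm P t := nrm_pos hsymm hidem hpos ht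
  set N := nrm P t with hNdef
  set u : Fin n → ℝ := uVec P t with hudef
  have hufix : ∀ i, ∑ k, P i k * u k = u i := uVec_fixed hsymm hidem hpos t
  have husq : ∑ k, u k ^ 2 = N := rfl
  have hun : ∀ k, 0 ≤ u k := uVec_nonneg hpos t
  -- k0 must be in the class of t
  have hk0 : P t k0 ≠ 0 := by
    by_contra hk0
    have h1 : P j0 k0 = 0 := by
      by_contra h1
      exact (pTrans hidem hpos hj0 h1) hk0
    have h2 : u k0 = 0 := by simp [hudef, uVec, hk0]
    exact hQ (by rw [h1, h2]; ring)
  set w : Fin n → ℝ := fun i => P i k0 - u i * u k0 / N with hwdef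
  -- w vanishes off the class
  have hw0 : ∀ i, P t i = 0 → w i = 0 := by
    intro i hi
    have h1 : P i k0 = 0 := by
      by_contra h1
      have h2 : P k0 i ≠ 0 := by rw [← pSym hsymm i k0]; exact h1
      exact (by simpa [hi] using pTrans hidem hpos hk0 h2)
    have h2 : u i = 0 := by simp [hudef, uVec, hi]
    simp [hwdef, h1, h2]
  have hwj0 : w j0 ≠ 0 := by
    intro h
    apply hQ
    have h' : P j0 k0 = u j0 * u k0 / N := by
      have := h
      simp only [hwdef] at this
      linarith
    rw [h']
    field_simp
  -- P fixes w
  have hPw : ∀ i, ∑ m, P i m * w m = w i := by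
    intro i
    have h1 : ∀ m, P i m * w m = P i m * P m k0 - (P i m * u m) * (u k0 / N) := by
      intro m; simp only [hwdef]; ring
    rw [Finset.sum_congr rfl fun m _ => h1 m, Finset.sum_sub_distrib, ← Finset.sum_mul,
      hufix i, ← pEntry hidem i k0]
    simp only [hwdef]; ring
  -- u ⊥ w
  have huPk0 : ∑ i, u i * P i k0 = u k0 := by
    rw [Finset.sum_congr rfl fun i _ => (by rw [pSym hsymm i k0]; ring :
      u i * P i k0 = P k0 i * u i)]
    exact hufix k0
  have huw : ∑ i, u i * w i = 0 := by
    have h1 : ∀ i, u i * w i = u i * P i k0 - (u i ^ 2) * (u k0 / N) := by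
      intro i; simp only [hwdef]; ring
    rw [Finset.sum_congr rfl fun i _ => h1 i, Finset.sum_sub_distrib, ← Finset.sum_mul,
      husq, huPk0]
    field_simp
    ring
  set a : Fin n → ℝ := fun i => |w i| with hadef
  set W : ℝ := ∑ i, w i ^ 2 with hWdef
  have hwPw : ∑ i, w i * (∑ m, P i m * w m) = W := by
    rw [Finset.sum_congr rfl fun i _ => by rw [hPw i]]
    simp [hWdef, pow_two]
  -- the Cauchy-Schwarz bound
  set y : Fin n → ℝ := P.mulVec a with hydef
  have hyfix : P.mulVec y = y := by
    rw [hydef, Matrix.mulVec_mulVec, hidem]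
  have hyn : ∀ i, 0 ≤ y i := by
    intro i
    simp only [hydef, Matrix.mulVec, dotProduct]
    exact Finset.sum_nonneg fun m _ => mul_nonneg (hpos i m) (abs_nonneg _)
  have hcnn : (0:ℝ) ≤ ∑ i, a i * y i :=
    Finset.sum_nonneg fun i _ => mul_nonneg (abs_nonneg _) (hyn i)
  have hvP : Matrix.vecMul y P = y := by
    rw [← Matrix.mulVec_transpose, hsymm, hyfix]
  have hyy : ∑ i, y i ^ 2 = ∑ i, a i * y i := by
    have h1 : ∑ i, y i ^ 2 = y ⬝ᵥ y := by simp [dotProduct, pow_two]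
    rw [h1]
    conv_lhs => rw [hydef]
    rw [Matrix.dotProduct_mulVec, hvP, dotProduct_comm]
    simp [dotProduct]
  have hW' : ∑ i, a i ^ 2 = W := by simp [hadef, hWdef, sq_abs]
  have hCS := Finset.sum_mul_sq_le_sq_mul_sq Finset.univ a y
  rw [hW', ← hyy] at hCS
  have hWnn : (0:ℝ) ≤ W := Finset.sum_nonneg fun i _ => sq_nonneg (w i)
  have hcle : ∑ i, a i * y i ≤ W := by nlinarith [hCS, hcnn, hyy, hWnn]
  have haPa_le : ∑ i, a i * (∑ m, P i m * a m) ≤ W := by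
    have : ∀ i, (∑ m, P i m * a m) = y i := fun i => rfl
    rw [Finset.sum_congr rfl fun i _ => by rw [this i]]
    exact hcle
  have hterm : ∀ i m, w i * (P i m * w m) ≤ a i * (P i m * a m) := by
    intro i m
    have h1 : w i * w m ≤ a i * a m := by
      calc w i * w m ≤ |w i * w m| := le_abs_self _
        _ = a i * a m := by simp [hadef, abs_mul]
    nlinarith [hpos i m, h1]
  have hle : ∑ i, w i * (∑ m, P i m * w m) ≤ ∑ i, a i * (∑ m, P i m * a m) := by
    refine Finset.sum_le_sum fun i _ => ?_
    rw [Finset.mul_sum, Finset.mul_sum]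
    exact Finset.sum_le_sum fun m _ => hterm i m
  have heq : ∑ i, a i * (∑ m, P i m * a m) = W :=
    le_antisymm haPa_le (hwPw ▸ hle)
  have e1 : ∑ i, ∑ m, a i * (P i m * a m) = W := by
    simp_rw [← Finset.mul_sum]; exact heq
  have e2 : ∑ i, ∑ m, w i * (P i m * w m) = W := by
    simp_rw [← Finset.mul_sum]; exact hwPw
  have hzero : ∑ i, ∑ m, (a i * (P i m * a m) - w i * (P i m * w m)) = 0 := by
    simp_rw [Finset.sum_sub_distrib]
    rw [e1, e2, sub_self]
  have hterm0 : ∀ i m, a i * (P i m * a m) - w i * (P i m * w m) = 0 := by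
    intro i m
    have h1 := (Finset.sum_eq_zero_iff_of_nonneg
      (fun i _ => Finset.sum_nonneg fun m _ => sub_nonneg.mpr (hterm i m))).1 hzero i
      (Finset.mem_univ i)
    exact (Finset.sum_eq_zero_iff_of_nonneg
      (fun m _ => sub_nonneg.mpr (hterm i m))).1 h1 m (Finset.mem_univ m)
  -- sign coherence on the class
  have hsign : ∀ i, P t i ≠ 0 → 0 ≤ w i * w j0 := by
    intro i hi
    have hit : P i t ≠ 0 := by rw [← pSym hsymm t i]; exact hi
    have hij0 : P i j0 ≠ 0 := pTrans hidem hpos hit hj0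
    have hP : 0 < P i j0 := lt_of_le_of_ne (hpos i j0) (Ne.symm hij0)
    have h0 := hterm0 i j0
    have h2 : P i j0 * (a i * a j0) = P i j0 * (w i * w j0) := by linear_combination h0
    have h3 : a i * a j0 = w i * w j0 := mul_left_cancel₀ (ne_of_gt hP) h2
    rw [← h3]
    exact mul_nonneg (abs_nonneg _) (abs_nonneg _)
  -- u j0 > 0
  have hj0t : P j0 t ≠ 0 := by rw [← pSym hsymm t j0]; exact hj0
  have hj0j0 : P j0 j0 ≠ 0 := pDiagNe hsymm hidem hj0t
  have hu0pos : 0 < u j0 := by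
    have h1 : u j0 = rsum P j0 := by simp [hudef, uVec, hj0]
    rw [h1]
    exact lt_of_lt_of_le (lt_of_le_of_ne (hpos j0 j0) (Ne.symm hj0j0)) (diag_le_rsum hpos j0)
  -- derive the contradiction
  rcases lt_or_gt_of_ne hwj0 with hneg | hposj
  · -- w j0 < 0 : all w i ≤ 0 hence ∑ u w < 0
    have hwle : ∀ i, u i * w i ≤ 0 := by
      intro i
      by_cases hi : P t i ≠ 0
      · have hs := hsign i hi
        have hwi : w i ≤ 0 := by nlinarith [hs, hneg]
        exact mul_nonpos_iff.2 (Or.inl ⟨hun i, hwi⟩)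
      · push_neg at hi
        rw [hw0 i hi, mul_zero]
    have hlt : u j0 * w j0 < 0 := mul_neg_of_pos_of_neg hu0pos hneg
    have hlt2 : ∑ i, u i * w i < ∑ _i : Fin n, (0:ℝ) :=
      Finset.sum_lt_sum (fun i _ => hwle i) ⟨j0, Finset.mem_univ j0, hlt⟩
    rw [huw, Finset.sum_const, smul_zero] at hlt2
    exact lt_irrefl 0 hlt2
  · -- w j0 > 0 : all w i ≥ 0 hence ∑ u w > 0
    have hwge : ∀ i, 0 ≤ u i * w i := by
      intro i
      by_cases hi : P t i ≠ 0
      · have hs := hsign i hi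
        have hwi : 0 ≤ w i := by nlinarith [hs, hposj]
        exact mul_nonneg (hun i) hwi
      · push_neg at hi
        rw [hw0 i hi, mul_zero]
    have hlt : 0 < u j0 * w j0 := mul_pos hu0pos hposj
    have hlt2 : ∑ _i : Fin n, (0:ℝ) < ∑ i, u i * w i :=
      Finset.sum_lt_sum (fun i _ => hwge i) ⟨j0, Finset.mem_univ j0, hlt⟩
    rw [huw, Finset.sum_const, smul_zero] at hlt2
    exact lt_irrefl 0 hlt2

end Main

section Final
variable {n : ℕ} {P : Matrix (Fin n) (Fin n) ℝ}

/-- the class of `i` -/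
noncomputable def cls (P : Matrix (Fin n) (Fin n) ℝ) (i : Fin n) : Finset (Fin n) :=
  Finset.univ.filter (fun k => P i k ≠ 0)

/-- canonical representative of the class of `i` -/
noncomputable def repc (P : Matrix (Fin n) (Fin n) ℝ) (i : Fin n) : Fin n :=
  if h : (cls P i).Nonempty then (cls P i).min' h else i

lemma cls_eq (hsymm : Pᵀ = P) (hidem : P * P = P) (hpos : ∀ i j, 0 ≤ P i j)
    {i j : Fin n} (hij : P i j ≠ 0) : cls P i = cls P j := by
  have hji : P j i ≠ 0 := by rw [← pSym hsymm i j]; exact hij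
  ext k
  simp only [cls, Finset.mem_filter, Finset.mem_univ, true_and]
  constructor
  · intro hik
    exact pTrans hidem hpos hji hik
  · intro hjk
    exact pTrans hidem hpos hij hjk

lemma repc_mem (hii : P i i ≠ 0) : P i (repc P i) ≠ 0 := by
  have hne : (cls P i).Nonempty := ⟨i, by simp [cls, hii]⟩
  have := (cls P i).min'_mem hne
  simp only [cls, Finset.mem_filter, Finset.mem_univ, true_and] at this
  rw [repc, dif_pos hne]
  exact this

lemma repc_congr (hsymm : Pᵀ = P) (hidem : P * P = P) (hpos : ∀ i j, 0 ≤ P i j)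
    {i j : Fin n} (hij : P i j ≠ 0) : repc P i = repc P j := by
  have hne_i : (cls P i).Nonempty := ⟨j, by simp [cls, hij]⟩
  have hcl := cls_eq hsymm hidem hpos hij
  have hne_j : (cls P j).Nonempty := hcl ▸ hne_i
  rw [repc, repc, dif_pos hne_i, dif_pos hne_j]
  simp only [hcl]

lemma uVec_ne_imp {t k : Fin n} (h : uVec P t k ≠ 0) : P t k ≠ 0 := by
  by_contra h2
  exact h (by simp [uVec, h2])

end Final

/-- A real orthogonal projection matrix with non-negative entries is a sum of outer
products of entrywise non-negative unit vectors with pairwise disjoint supports. -/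
theorem stmt7 {n : ℕ} (P : Matrix (Fin n) (Fin n) ℝ)
    (hsymm : Pᵀ = P) (hidem : P * P = P) (hpos : ∀ i j, 0 ≤ P i j) :
    ∃ (r : ℕ) (v : Fin r → Fin n → ℝ),
      (∀ a, ∑ i, v a i ^ 2 = 1) ∧
      (∀ a i, 0 ≤ v a i) ∧
      (∀ a b, a ≠ b → ∀ i, ¬(v a i ≠ 0 ∧ v b i ≠ 0)) ∧
      P = ∑ a, Matrix.vecMulVec (v a) (v a) := by
  classical
  set T : Finset (Fin n) := (Finset.univ.filter (fun i => P i i ≠ 0)).image (repc P) with hT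
  have hTmem : ∀ x, x ∈ T → P x x ≠ 0 ∧ repc P x = x := by
    intro x hx
    rw [hT, Finset.mem_image] at hx
    obtain ⟨i, hi, hxi⟩ := hx
    rw [Finset.mem_filter] at hi
    have hii : P i i ≠ 0 := hi.2
    have hix : P i x ≠ 0 := by rw [← hxi]; exact repc_mem hii
    have hxi2 : P x i ≠ 0 := by rw [← pSym hsymm i x]; exact hix
    refine ⟨pDiagNe hsymm hidem hxi2, ?_⟩
    rw [← repc_congr hsymm hidem hpos hix, hxi]
  set e : Fin T.card ≃o {x // x ∈ T} := T.orderIsoOfFin rfl with he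
  set tt : Fin T.card → Fin n := fun a => (e a : Fin n) with htt
  have httT : ∀ a, tt a ∈ T := fun a => (e a).2
  have htt_inj : Function.Injective tt := by
    intro a b hab
    have : (e a : Fin n) = (e b : Fin n) := hab
    exact e.injective (Subtype.ext this)
  refine ⟨T.card, fun a k => uVec P (tt a) k / Real.sqrt (nrm P (tt a)), ?_, ?_, ?_, ?_⟩
  · -- unit vectors
    intro a
    have ht := (hTmem _ (httT a)).1
    have hN : 0 < nrm P (tt a) := nrm_pos hsymm hidem hpos ht
    have hs : Real.sqrt (nrm P (tt a)) ^ 2 = nrm P (tt a) := Real.sq_sqrt hN.le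
    simp_rw [div_pow, hs]
    rw [← Finset.sum_div]
    show nrm P (tt a) / nrm P (tt a) = 1
    exact div_self (ne_of_gt hN)
  · -- nonneg
    intro a i
    exact div_nonneg (uVec_nonneg hpos _ _) (Real.sqrt_nonneg _)
  · -- disjoint supports
    intro a b hab i ⟨ha, hb⟩
    have h1 : uVec P (tt a) i ≠ 0 := fun h => ha (by
      show uVec P (tt a) i / Real.sqrt (nrm P (tt a)) = 0
      rw [h, zero_div])
    have h2 : uVec P (tt b) i ≠ 0 := fun h => hb (by
      show uVec P (tt b) i / Real.sqrt (nrm P (tt b)) = 0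
      rw [h, zero_div])
    have h1' : P (tt a) i ≠ 0 := uVec_ne_imp h1
    have h2' : P (tt b) i ≠ 0 := uVec_ne_imp h2
    have h2'' : P i (tt b) ≠ 0 := by rw [← pSym hsymm (tt b) i]; exact h2'
    have hab2 : P (tt a) (tt b) ≠ 0 := pTrans hidem hpos h1' h2''
    have : tt a = tt b := by
      rw [← (hTmem _ (httT a)).2, ← (hTmem _ (httT b)).2]
      exact repc_congr hsymm hidem hpos hab2
    exact hab (htt_inj this)
  · -- the sum
    ext i j
    rw [Matrix.sum_apply]
    simp_rw [Matrix.vecMulVec_apply]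
    by_cases hii : P i i = 0
    · rw [pRowZero hsymm hidem hii j]
      refine (Finset.sum_eq_zero fun a _ => ?_).symm
      have : uVec P (tt a) i = 0 := by
        by_contra h
        have h1 : P (tt a) i ≠ 0 := uVec_ne_imp h
        have h2 : P i (tt a) ≠ 0 := by rw [← pSym hsymm (tt a) i]; exact h1
        exact pDiagNe hsymm hidem h2 hii
      rw [this]
      simp
    · -- i is in the class of t := repc P i
      set t : Fin n := repc P i with htdef
      have hit : P i t ≠ 0 := repc_mem hii
      have htT : t ∈ T := by
        rw [hT, Finset.mem_image]
        exact ⟨i, by simp [hii], rfl⟩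
      set a0 : Fin T.card := e.symm ⟨t, htT⟩ with ha0
      have htta0 : tt a0 = t := by
        rw [htt, ha0]
        simp
      have htt0 : P t t ≠ 0 := (hTmem _ htT).1
      have hti : P t i ≠ 0 := by rw [← pSym hsymm i t]; exact hit
      have hN : 0 < nrm P t := nrm_pos hsymm hidem hpos htt0
      rw [Finset.sum_eq_single a0]
      · rw [htta0]
        rw [div_mul_div_comm, ← Real.sqrt_mul_self hN.le]
        have hmain := pMain hsymm hidem hpos htt0 i j hti
        rw [Real.sqrt_mul_self hN.le]
        field_simp
        rw [Real.sq_sqrt hN.le]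
        linarith [hmain]
      · intro a _ ha
        have : uVec P (tt a) i = 0 := by
          by_contra h
          have h1 : P (tt a) i ≠ 0 := uVec_ne_imp h
          have h2 : P i (tt a) ≠ 0 := by rw [← pSym hsymm (tt a) i]; exact h1
          have : repc P i = repc P (tt a) := repc_congr hsymm hidem hpos h2
          have h3 : tt a = t := by
            rw [htdef, this, (hTmem _ (httT a)).2]
          exact ha (htt_inj (h3.trans htta0.symm))
        rw [this]
        simp
      · intro h
        exact absurd (Finset.mem_univ a0) h
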